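/- Let B be an integral domain containing a field k of characteristic zero, and let D be a nonzero locally nilpotent derivation of B with kernel A. Then the transcendence degree of B over A (i.e., of Frac(B) over Frac(A)) equals 1. -/

import Mathlib

variable {k B : Type*} [Field k] [CharZero k] [CommRing B] [IsDomain B] [Algebra k B]

/-- A derivation is locally nilpotent if every element is killed by some iterate. -/
def IsLocallyNilpotentDeriv {R A : Type*} [CommRing R] [CommRing A] [Algebra R A]
    (D : Derivation R A A) : Prop :=
  ∀ x : A, ∃ n : ℕ, (⇑D)^[n] x = 0

/-- The kernel of a derivation, as a subalgebra. -/
def Derivation.kerSubalgebra {R A : Type*} [CommRing R] [CommRing A] [Algebra R A]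
    (D : Derivation R A A) : Subalgebra R A where
  carrier := {b | D b = 0}
  mul_mem' := by
    intro a b ha hb
    simp only [Set.mem_setOf_eq] at *
    rw [D.leibniz]
    simp [ha, hb]
  add_mem' := by
    intro a b ha hb
    simp only [Set.mem_setOf_eq] at *
    simp [ha, hb]
  algebraMap_mem' := by intro r; simp [Set.mem_setOf_eq]

lemma mem_kerSubalgebra_iff (D : Derivation k B B) (x : B) :
    x ∈ D.kerSubalgebra ↔ D x = 0 := Iff.rfl

lemma algebraMap_kerSubalgebra (D : Derivation k B B) (a : D.kerSubalgebra) :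
    algebraMap D.kerSubalgebra B a = a.1 := rfl

set_option synthInstance.maxHeartbeats 400000 in
lemma D_aeval (D : Derivation k B B) (b : B) (p : Polynomial D.kerSubalgebra) :
    D (Polynomial.aeval b p) = Polynomial.aeval b (Polynomial.derivative p) * D b := by
  induction p using Polynomial.induction_on' with
  | add p q hp hq => simp [hp, hq, add_mul]
  | monomial n a =>
    have ha : D ((a : B)) = 0 := a.2
    rcases n with _ | n
    · simp [Polynomial.aeval_monomial, algebraMap_kerSubalgebra, ha]
    · rw [Polynomial.derivative_monomial]
      simp only [Polynomial.aeval_monomial, algebraMap_kerSubalgebra, Derivation.leibniz,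
        Derivation.leibniz_pow, ha, smul_eq_mul, nsmul_eq_mul]
      push_cast
      ring

set_option linter.unusedSectionVars false

lemma exists_antideriv (D : Derivation k B B) (q : Polynomial D.kerSubalgebra) :
    ∃ Q : Polynomial D.kerSubalgebra, Polynomial.derivative Q = q := by
  induction q using Polynomial.induction_on' with
  | add p q hp hq =>
    obtain ⟨P, hP⟩ := hp; obtain ⟨Q, hQ⟩ := hq
    exact ⟨P + Q, by simp [hP, hQ]⟩
  | monomial n a =>
    refine ⟨Polynomial.monomial (n+1) ((algebraMap k _ (((n : k)+1)⁻¹)) * a), ?_⟩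
    rw [Polynomial.derivative_monomial]
    simp only [Nat.add_sub_cancel, Nat.cast_add, Nat.cast_one]
    congr 1
    have hne : ((n : k) + 1) ≠ 0 := Nat.cast_add_one_ne_zero n
    have : ((n : D.kerSubalgebra) + 1) = algebraMap k _ ((n : k) + 1) := by
      push_cast; simp
    rw [this, mul_comm (algebraMap k _ (((n : k)+1)⁻¹)) a, mul_assoc, ← map_mul,
      inv_mul_cancel₀ hne, map_one, mul_one]

set_option synthInstance.maxHeartbeats 400000 in
lemma main_step (D : Derivation k B B) (b : B) (hb : D (D b) = 0) :
    ∀ n (x : B), (⇑D)^[n] x = 0 → ∃ (N : ℕ) (q : Polynomial D.kerSubalgebra),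
      (D b)^N * x = Polynomial.aeval b q := by
  intro n
  induction n with
  | zero =>
    intro x hx
    simp only [Function.iterate_zero, id_eq] at hx
    exact ⟨0, 0, by simp [hx]⟩
  | succ n ih =>
    intro x hx
    obtain ⟨M, q, hq⟩ := ih (D x) (by rwa [← Function.iterate_succ_apply])
    obtain ⟨Q, hQ⟩ := exists_antideriv D q
    have h1 : D ((D b)^(M+1) * x) = (D b) * ((D b)^M * (D x)) := by
      rw [D.leibniz, Derivation.leibniz_pow, hb]
      simp [smul_eq_mul, pow_succ]
      ring
    have hDy : D ((D b)^(M+1) * x - Polynomial.aeval b Q) = 0 := by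
      rw [map_sub, h1, hq, D_aeval, hQ]
      ring
    refine ⟨M+1, Q + Polynomial.C ⟨_, hDy⟩, ?_⟩
    rw [map_add, Polynomial.aeval_C, algebraMap_kerSubalgebra]
    ring

set_option synthInstance.maxHeartbeats 400000 in
set_option maxHeartbeats 1000000 in
/-- If D is a nonzero locally nilpotent derivation of the domain B with kernel A, then
the transcendence degree of B over A is 1: some single element of B forms a
transcendence basis of B over A. -/
theorem kernel_trdeg_one (D : Derivation k B B) (hD : D ≠ 0)
    (hLND : IsLocallyNilpotentDeriv D) :
    ∃ b : B, IsTranscendenceBasis (D.kerSubalgebra) (fun _ : Unit => b) := by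
  classical
  haveI : CharZero B := charZero_of_injective_algebraMap (algebraMap k B).injective
  have hAinj : Function.Injective (algebraMap D.kerSubalgebra B) := Subtype.val_injective
  -- find a slice: b with D b ≠ 0 and D (D b) = 0
  obtain ⟨x, hx⟩ : ∃ x : B, D x ≠ 0 := by
    by_contra h; push_neg at h
    exact hD (by ext y; simp [h])
  have hex : ∃ n, (⇑D)^[n] x = 0 := hLND x
  set n := Nat.find hex with hndef
  have hn : (⇑D)^[n] x = 0 := Nat.find_spec hex
  have hn2 : 2 ≤ n := by
    by_contra h
    push_neg at h
    interval_cases n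
    · simp only [Function.iterate_zero, id_eq] at hn
      exact hx (by rw [hn, map_zero])
    · simp only [Function.iterate_one] at hn
      exact hx hn
  set b := (⇑D)^[n-2] x with hbdef
  have hDb1 : D b = (⇑D)^[n-1] x := by
    rw [hbdef, show n - 1 = n - 2 + 1 by omega]
    exact (Function.iterate_succ_apply' (⇑D) (n-2) x).symm
  have hDb : D b ≠ 0 := by
    rw [hDb1]
    exact Nat.find_min hex (by omega)
  have hDDb : D (D b) = 0 := by
    rw [hDb1,
      show D ((⇑D)^[n-1] x) = (⇑D)^[n-1+1] x from
        (Function.iterate_succ_apply' (⇑D) (n-1) x).symm,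
      show n - 1 + 1 = n by omega, hn]
  -- b is transcendental over the kernel
  have base : ∀ p : Polynomial D.kerSubalgebra, p.natDegree = 0 →
      Polynomial.aeval b p = 0 → p = 0 := by
    intro p h0 hp
    obtain ⟨a, rfl⟩ := Polynomial.natDegree_eq_zero.mp h0
    rw [Polynomial.aeval_C] at hp
    rw [show a = 0 from hAinj (by simpa using hp)]
    simp
  have key : ∀ (m : ℕ) (p : Polynomial D.kerSubalgebra), p.natDegree ≤ m →
      Polynomial.aeval b p = 0 → p = 0 := by
    intro m
    induction m with
    | zero => intro p hdeg hp; exact base p (Nat.le_zero.mp hdeg) hp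
    | succ m ih =>
      intro p hdeg hp
      have h1 : Polynomial.aeval b (Polynomial.derivative p) * D b = 0 := by
        rw [← D_aeval, hp, map_zero]
      have h2 : Polynomial.aeval b (Polynomial.derivative p) = 0 := by
        rcases mul_eq_zero.1 h1 with h | h
        · exact h
        · exact absurd h hDb
      have h3 : Polynomial.derivative p = 0 :=
        ih _ (le_trans (Polynomial.natDegree_derivative_le p) (by omega)) h2
      exact base p (Polynomial.natDegree_eq_zero_of_derivative_eq_zero h3) hp
  have trans : Transcendental D.kerSubalgebra b := by
    rintro ⟨p, hp0, hpb⟩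
    exact hp0 (key p.natDegree p le_rfl hpb)
  -- B is algebraic over adjoin A {b}
  have halg : Algebra.IsAlgebraic
      (Algebra.adjoin D.kerSubalgebra (Set.range fun _ : Unit => b)) B := by
    constructor
    intro y
    obtain ⟨m, hm⟩ := hLND y
    obtain ⟨N, q, hq⟩ := main_step D b hDDb m y hm
    have htN : (D b) ^ N ∈ D.kerSubalgebra := by
      rw [mem_kerSubalgebra_iff, Derivation.leibniz_pow, hDDb]
      simp
    have htN' : (D b) ^ N ∈
        Algebra.adjoin D.kerSubalgebra (Set.range fun _ : Unit => b) :=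
      Subalgebra.algebraMap_mem _ (⟨_, htN⟩ : D.kerSubalgebra)
    have hmem : Polynomial.aeval b q ∈
        Algebra.adjoin D.kerSubalgebra (Set.range fun _ : Unit => b) := by
      rw [Set.range_const, Algebra.adjoin_singleton_eq_range_aeval]
      exact ⟨q, rfl⟩
    refine ⟨Polynomial.C ⟨_, htN'⟩ * Polynomial.X - Polynomial.C ⟨_, hmem⟩, ?_, ?_⟩
    · intro h
      have hc := congrArg (fun r => Polynomial.coeff r 1) h
      simp only [Polynomial.coeff_sub, Polynomial.coeff_C_mul, Polynomial.coeff_X_one,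
        mul_one, Polynomial.coeff_C, Polynomial.coeff_zero] at hc
      norm_num at hc
      have : (D b) ^ N = 0 := congrArg Subtype.val hc
      exact pow_ne_zero N hDb this
    · rw [map_sub, map_mul, Polynomial.aeval_C, Polynomial.aeval_C, Polynomial.aeval_X]
      show (D b) ^ N * y - Polynomial.aeval b q = 0
      rw [hq, sub_self]
  -- package as transcendence basis
  refine ⟨b, ?_, ?_⟩
  · rw [algebraicIndependent_unique_type_iff]
    exact trans
  · intro s hs hsub
    have hbs : b ∈ s := hsub ⟨(), rfl⟩
    apply Set.Subset.antisymm hsub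
    intro c hc
    by_contra hcr
    have hne : c ≠ b := by
      intro h
      exact hcr ⟨(), h.symm⟩
    have hindep : AlgebraicIndependent D.kerSubalgebra
        (fun o : Option Unit => o.elim c (fun _ => b)) := by
      have hinj : Function.Injective
          (fun o : Option Unit => (o.elim ⟨c, hc⟩ (fun _ => ⟨b, hbs⟩) : s)) := by
        intro o1 o2 h
        cases o1 <;> cases o2
        · rfl
        · exact absurd (congrArg Subtype.val h) hne
        · exact absurd (congrArg Subtype.val h).symm hne
        · rfl
      have := hs.comp _ hinj
      convert this using 1
      funext o
      cases o <;> rfl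
    have htr := (((algebraicIndependent_unique_type_iff).mpr trans).option_iff_transcendental c).1 hindep
    exact htr (halg.isAlgebraic c)
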